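/- If H is a graph with o(H) = 𝒟, then γ_MB(K₂⊙H) = 1 + γ_MB(H). -/

import Mathlib

/-!
Formalization of the Maker-Breaker domination game (MBD game).

In the MBD game on a graph `G`, Dominator and Staller alternately select
previously unplayed vertices.  Dominator wins when the set of vertices he has
selected is a dominating set of `G`; Staller wins when she has selected a
vertex of every dominating set of `G`, which happens exactly when the closed
neighbourhood of some vertex is entirely contained in her set of selected
vertices.
-/

/-- `D` is a dominating set of `G` (as a finset of vertices). -/
def IsDomSet {V : Type*} (G : SimpleGraph V) (D : Finset V) : Prop :=
  ∀ v, v ∈ D ∨ ∃ u ∈ D, G.Adj u v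

/-- Staller (whose selected vertices form `S`) has won: she owns the whole
closed neighbourhood of some vertex, hence a vertex of every dominating set. -/
def StallerWon {V : Type*} (G : SimpleGraph V) (S : Finset V) : Prop :=
  ∃ v, v ∈ S ∧ ∀ u, G.Adj v u → u ∈ S

section Game

variable {V : Type*} [DecidableEq V]

mutual
  /-- Position with Dominator's vertices `D`, Staller's vertices `S` and
  Dominator to move: Dominator can guarantee to complete a dominating set
  using at most `k` further moves of his own. -/
  inductive DomWinD (G : SimpleGraph V) : Finset V → Finset V → ℕ → Prop where
    | done (D S : Finset V) (k : ℕ) : IsDomSet G D → DomWinD G D S k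
    | step (D S : Finset V) (k : ℕ) (v : V) : v ∉ D → v ∉ S →
        DomWinS G (insert v D) S k → DomWinD G D S (k + 1)

  /-- Position with Dominator's vertices `D`, Staller's vertices `S` and
  Staller to move: Dominator can guarantee to complete a dominating set
  using at most `k` further moves of his own. -/
  inductive DomWinS (G : SimpleGraph V) : Finset V → Finset V → ℕ → Prop where
    | done (D S : Finset V) (k : ℕ) : IsDomSet G D → DomWinS G D S k
    | step (D S : Finset V) (k : ℕ) : (∃ w, w ∉ D ∧ w ∉ S) →
        (∀ w, w ∉ D → w ∉ S → DomWinD G D (insert w S) k) → DomWinS G D S k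
end

mutual
  /-- Position with Dominator's vertices `D`, Staller's vertices `S` and
  Staller to move: Staller can guarantee to claim a whole closed neighbourhood
  using at most `k` further moves of her own. -/
  inductive StalWinS (G : SimpleGraph V) : Finset V → Finset V → ℕ → Prop where
    | done (D S : Finset V) (k : ℕ) : StallerWon G S → StalWinS G D S k
    | step (D S : Finset V) (k : ℕ) (w : V) : w ∉ D → w ∉ S →
        StalWinD G D (insert w S) k → StalWinS G D S (k + 1)

  /-- Position with Dominator's vertices `D`, Staller's vertices `S` and
  Dominator to move: Staller can guarantee to claim a whole closed
  neighbourhood using at most `k` further moves of her own. -/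
  inductive StalWinD (G : SimpleGraph V) : Finset V → Finset V → ℕ → Prop where
    | done (D S : Finset V) (k : ℕ) : StallerWon G S → StalWinD G D S k
    | step (D S : Finset V) (k : ℕ) : (∃ v, v ∉ D ∧ v ∉ S) →
        (∀ v, v ∉ D → v ∉ S → StalWinS G (insert v D) S k) → StalWinD G D S k
end

/-- `γ_MB(G)`: minimum number of Dominator's moves with which he can guarantee
to win the D-game (Dominator moves first); `⊤` if he cannot win it. -/
noncomputable def gammaMB (G : SimpleGraph V) : ℕ∞ :=
  sInf {k : ℕ∞ | ∃ n : ℕ, k = n ∧ DomWinD G ∅ ∅ n}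

/-- `γ_MB'(G)`: minimum number of Dominator's moves with which he can guarantee
to win the S-game (Staller moves first); `⊤` if he cannot win it. -/
noncomputable def gammaMB' (G : SimpleGraph V) : ℕ∞ :=
  sInf {k : ℕ∞ | ∃ n : ℕ, k = n ∧ DomWinS G ∅ ∅ n}

/-- `γ_SMB(G)`: minimum number of Staller's moves with which she can guarantee
to win the D-game (Dominator moves first); `⊤` if she cannot win it. -/
noncomputable def gammaSMB (G : SimpleGraph V) : ℕ∞ :=
  sInf {k : ℕ∞ | ∃ n : ℕ, k = n ∧ StalWinD G ∅ ∅ n}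

/-- `γ_SMB'(G)`: minimum number of Staller's moves with which she can guarantee
to win the S-game (Staller moves first); `⊤` if she cannot win it. -/
noncomputable def gammaSMB' (G : SimpleGraph V) : ℕ∞ :=
  sInf {k : ℕ∞ | ∃ n : ℕ, k = n ∧ StalWinS G ∅ ∅ n}

/-- Outcome `𝒟`: Dominator has a winning strategy no matter who starts. -/
def OutcomeD (G : SimpleGraph V) : Prop :=
  (∃ n, DomWinD G ∅ ∅ n) ∧ (∃ n, DomWinS G ∅ ∅ n)

/-- Outcome `𝒮`: Staller has a winning strategy no matter who starts. -/
def OutcomeS (G : SimpleGraph V) : Prop :=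
  (∃ n, StalWinD G ∅ ∅ n) ∧ (∃ n, StalWinS G ∅ ∅ n)

/-- Outcome `𝒩`: the first player has a winning strategy. -/
def OutcomeN (G : SimpleGraph V) : Prop :=
  (∃ n, DomWinD G ∅ ∅ n) ∧ (∃ n, StalWinS G ∅ ∅ n)

end Game

/-- The corona product `G ⊙ H`: one copy of `G`, a copy of `H` for every
vertex of `G`, and the `i`-th vertex of `G` joined to every vertex of the
`i`-th copy of `H`. -/
def coronaProd {α β : Type*} (G : SimpleGraph α) (H : SimpleGraph β) :
    SimpleGraph (α ⊕ α × β) where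
  Adj x y :=
    match x, y with
    | Sum.inl a, Sum.inl a' => G.Adj a a'
    | Sum.inl a, Sum.inr p => a = p.1
    | Sum.inr p, Sum.inl a => a = p.1
    | Sum.inr p, Sum.inr q => p.1 = q.1 ∧ H.Adj p.2 q.2
  symm := by
    refine ⟨?_⟩
    rintro (a | p) (a' | q) h
    · exact G.adj_symm h
    · exact h
    · exact h
    · exact ⟨h.1.symm, H.adj_symm h.2⟩
  loopless := by
    refine ⟨?_⟩
    rintro (a | p) h
    · exact G.ne_of_adj h rfl
    · exact H.ne_of_adj h.2 rfl

/-- The domination number `γ(G)` of a finite graph. -/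
noncomputable def domNumber {V : Type*} [Fintype V] (G : SimpleGraph V) : ℕ :=
  sInf {n : ℕ | ∃ D : Finset V, D.card = n ∧ IsDomSet G D}

/-- `v` is a dominating vertex: it is adjacent to all other vertices. -/
def IsDomVertex {V : Type*} (G : SimpleGraph V) (v : V) : Prop :=
  ∀ u, u ≠ v → G.Adj v u

/-- `v` is an isolated vertex (degree `0`). -/
def IsIsolatedVertex {V : Type*} (G : SimpleGraph V) (v : V) : Prop :=
  ∀ u, ¬ G.Adj v u

/-- `v` is a leaf (degree `1`). -/
def IsLeaf {V : Type*} (G : SimpleGraph V) (v : V) : Prop :=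
  ∃! u, G.Adj v u

/-- `v` is a strong support vertex: adjacent to at least two leaves. -/
def IsStrongSupport {V : Type*} (G : SimpleGraph V) (v : V) : Prop :=
  ∃ u w, u ≠ w ∧ G.Adj v u ∧ G.Adj v w ∧ IsLeaf G u ∧ IsLeaf G w


section MBDAux
namespace MBD
variable {V : Type*} [DecidableEq V] {G : SimpleGraph V} {D S : Finset V} {k : ℕ}

lemma invD (h : DomWinD G D S k) :
    IsDomSet G D ∨ ∃ k' v, k = k' + 1 ∧ v ∉ D ∧ v ∉ S ∧ DomWinS G (insert v D) S k' := by
  cases h with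
  | done _ _ _ h => exact Or.inl h
  | step _ _ k v h1 h2 h3 => exact Or.inr ⟨k, v, rfl, h1, h2, h3⟩

lemma invS (h : DomWinS G D S k) :
    IsDomSet G D ∨ ((∃ w, w ∉ D ∧ w ∉ S) ∧ ∀ w, w ∉ D → w ∉ S → DomWinD G D (insert w S) k) := by
  cases h with
  | done _ _ _ h => exact Or.inl h
  | step _ _ _ he hr => exact Or.inr ⟨he, hr⟩

variable [Fintype V]

/-- measure -/
def meas (D S : Finset V) (k : ℕ) : ℕ := k * (Fintype.card V + 1) + (Finset.univ \ (D ∪ S)).card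

lemma meas_lt_of_step {D S : Finset V} {k : ℕ} (v : V) :
    meas (insert v D) S k < meas D S (k + 1) := by
  unfold meas
  have h1 : (Finset.univ \ (insert v D ∪ S)).card ≤ Fintype.card V := by
    simpa using Finset.card_le_univ _
  nlinarith [h1]

lemma meas_lt_of_insertS {D S : Finset V} {k : ℕ} {w : V} (h1 : w ∉ D) (h2 : w ∉ S) :
    meas D (insert w S) k < meas D S k := by
  unfold meas
  have : (Finset.univ \ (D ∪ insert w S)).card < (Finset.univ \ (D ∪ S)).card := by
    apply Finset.card_lt_card
    constructor
    · intro x hx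
      simp only [Finset.mem_sdiff, Finset.mem_union, Finset.mem_insert] at hx ⊢
      tauto
    · intro hsub
      have := hsub (by simp [h1, h2] : w ∈ Finset.univ \ (D ∪ S))
      simp at this
  omega

lemma anti_aux : ∀ μ : ℕ, ∀ (k : ℕ) (D S' : Finset V), meas D S' k < μ →
    (DomWinD G D S' k → ∀ S ⊆ S', DomWinD G D S k) ∧
    (DomWinS G D S' k → ∀ S ⊆ S', DomWinS G D S k) := by
  intro μ
  induction μ with
  | zero => intro k D S' h; omega
  | succ μ ih =>
    intro k D S' hm
    constructor
    · intro h S hS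
      rcases invD h with hd | ⟨k', v, rfl, hvD, hvS', hsub⟩
      · exact .done _ _ _ hd
      · refine .step _ _ _ v hvD (fun c => hvS' (hS c)) ?_
        exact (ih k' (insert v D) S' (by have := meas_lt_of_step (D := D) (S := S') (k := k') v; omega)).2 hsub S hS
    · intro h S hS
      rcases invS h with hd | ⟨⟨w0, hw0D, hw0S'⟩, resp⟩
      · exact .done _ _ _ hd
      · refine .step _ _ _ ⟨w0, hw0D, fun c => hw0S' (hS c)⟩ ?_
        intro w hwD hwS
        by_cases hw : w ∈ S'
        · refine (ih k D (insert w0 S') (by have := meas_lt_of_insertS (k := k) hw0D hw0S'; omega)).1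
            (resp w0 hw0D hw0S') (insert w S) ?_
          intro x hx
          rcases Finset.mem_insert.1 hx with rfl | hx
          · exact Finset.mem_insert_of_mem hw
          · exact Finset.mem_insert_of_mem (hS hx)
        · refine (ih k D (insert w S') (by have := meas_lt_of_insertS (k := k) hwD hw; omega)).1
            (resp w hwD hw) (insert w S) ?_
          intro x hx
          rcases Finset.mem_insert.1 hx with rfl | hx
          · exact Finset.mem_insert_self _ _
          · exact Finset.mem_insert_of_mem (hS hx)

lemma antiD (h : DomWinD G D S k) {S₀ : Finset V} (hS : S₀ ⊆ S) : DomWinD G D S₀ k :=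
  (anti_aux (meas D S k + 1) k D S (Nat.lt_succ_self _)).1 h S₀ hS

lemma antiS (h : DomWinS G D S k) {S₀ : Finset V} (hS : S₀ ⊆ S) : DomWinS G D S₀ k :=
  (anti_aux (meas D S k + 1) k D S (Nat.lt_succ_self _)).2 h S₀ hS

lemma StoD (h : DomWinS G D S k) : DomWinD G D S k := by
  rcases invS h with hd | ⟨⟨w0, h1, h2⟩, resp⟩
  · exact .done _ _ _ hd
  · exact antiD (resp w0 h1 h2) (Finset.subset_insert _ _)

/-- a "dead" vertex kills any Dominator win -/
def Dead (G : SimpleGraph V) (D S : Finset V) (x : V) : Prop :=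
  x ∈ S ∧ x ∉ D ∧ ∀ u, G.Adj x u → u ∈ S ∧ u ∉ D

lemma dead_aux : ∀ μ : ℕ, ∀ (k : ℕ) (D S : Finset V) (x : V), meas D S k < μ → Dead G D S x →
    (¬ DomWinD G D S k) ∧ (¬ DomWinS G D S k) := by
  intro μ
  induction μ with
  | zero => intro k D S x h; omega
  | succ μ ih =>
    intro k D S x hm hx
    have hnd : ¬ IsDomSet G D := by
      intro hd
      rcases hd x with h | ⟨u, hu, ha⟩
      · exact hx.2.1 h
      · exact (hx.2.2 u (G.adj_symm ha)).2 hu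
    constructor
    · intro h
      rcases invD h with hd | ⟨k', v, rfl, hvD, hvS, hsub⟩
      · exact hnd hd
      · refine (ih k' (insert v D) S x
          (by have := meas_lt_of_step (D := D) (S := S) (k := k') v; omega) ?_).2 hsub
        refine ⟨hx.1, ?_, fun u hu => ⟨(hx.2.2 u hu).1, ?_⟩⟩
        · simp only [Finset.mem_insert]
          rintro (rfl | hc)
          · exact hvS hx.1
          · exact hx.2.1 hc
        · simp only [Finset.mem_insert]
          rintro (rfl | hc)
          · exact hvS (hx.2.2 _ hu).1
          · exact (hx.2.2 u hu).2 hc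
    · intro h
      rcases invS h with hd | ⟨⟨w0, h1, h2⟩, resp⟩
      · exact hnd hd
      · refine (ih k D (insert w0 S) x
          (by have := meas_lt_of_insertS (k := k) h1 h2; omega) ?_).1 (resp w0 h1 h2)
        exact ⟨Finset.mem_insert_of_mem hx.1, hx.2.1,
          fun u hu => ⟨Finset.mem_insert_of_mem (hx.2.2 u hu).1, (hx.2.2 u hu).2⟩⟩

variable {β : Type*} [Fintype β] [DecidableEq β] (H : SimpleGraph β)

local notation "G'" => coronaProd (⊤ : SimpleGraph (Fin 2)) H
abbrev Wv (β : Type*) := (Fin 2 ⊕ Fin 2 × β)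

/-- projection of a dominating set of the corona to a copy whose root is Staller's -/
lemma proj {a : Fin 2} {Dg : Finset (Wv β)} {Dh : Finset β}
    (h2 : ∀ b, Sum.inr (a, b) ∈ Dg ↔ b ∈ Dh) (h5 : Sum.inl a ∉ Dg)
    (hdom : IsDomSet G' Dg) : IsDomSet H Dh := by
  intro b
  rcases hdom (Sum.inr (a, b)) with h | ⟨u, hu, hadj⟩
  · exact Or.inl ((h2 b).1 h)
  · match u with
    | Sum.inl c =>
      have hc : c = a := hadj
      exact absurd (hc ▸ hu) h5
    | Sum.inr (c, b') =>
      have hc : c = a ∧ H.Adj b' b := hadj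
      exact Or.inr ⟨b', (h2 b').1 (by rw [← hc.1]; exact hu), hc.2⟩

lemma lower_main (a : Fin 2) : ∀ n : ℕ, ∀ (Dg Sg : Finset (Wv β)) (Dh Sh : Finset β) (nh : ℕ),
    Sg = insert (Sum.inl a) (Sh.image (fun b => Sum.inr (a, b))) →
    (∀ b, Sum.inr (a, b) ∈ Dg ↔ b ∈ Dh) →
    Sum.inl a ∉ Dg →
    n ≤ nh →
    DomWinD G' Dg Sg n → DomWinD H Dh Sh nh := by
  intro n
  induction n using Nat.strong_induction_on with
  | _ n ih =>
    intro Dg Sg Dh Sh nh h3 h2 h5 h6 hwin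
    rcases invD hwin with hdom | ⟨k, v, rfl, hvD, hvS, hsub⟩
    · exact .done _ _ _ (proj H h2 h5 hdom)
    · have hAS : (Sum.inl a : Wv β) ∈ Sg := by rw [h3]; exact Finset.mem_insert_self _ _
      by_cases hv : ∃ b, v = Sum.inr (a, b)
      · -- Dominator plays in copy a
        obtain ⟨b, rfl⟩ := hv
        have hbD : b ∉ Dh := fun c => hvD ((h2 b).2 c)
        have hbS : b ∉ Sh := fun c => hvS (by
          rw [h3]; exact Finset.mem_insert_of_mem (Finset.mem_image_of_mem _ c))
        obtain ⟨kh, rfl⟩ : ∃ kh, nh = kh + 1 := ⟨nh - 1, by omega⟩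
        refine .step _ _ _ b hbD hbS ?_
        -- handler: goal DomWinS H (insert b Dh) Sh kh
        have h2' : ∀ b', Sum.inr (a, b') ∈ insert (Sum.inr (a, b)) Dg ↔ b' ∈ insert b Dh := by
          intro b'
          rw [Finset.mem_insert, Finset.mem_insert, h2 b']
          simp
        have h5' : (Sum.inl a : Wv β) ∉ insert (Sum.inr (a, b)) Dg := by
          simp [Finset.mem_insert, h5]
        clear hwin
        -- now general handler by cases on hsub
        rcases invS hsub with hdom | ⟨⟨w0, hw0D, hw0S⟩, resp⟩
        · exact .done _ _ _ (proj H h2' h5' hdom)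
        · by_cases hfree : ∃ b1, b1 ∉ insert b Dh ∧ b1 ∉ Sh
          · refine .step _ _ _ hfree ?_
            intro b' hbD' hbS'
            have hjD : Sum.inr (a, b') ∉ insert (Sum.inr (a, b)) Dg := fun c => hbD' ((h2' b').1 c)
            have hjS : Sum.inr (a, b') ∉ Sg := by
              rw [h3]
              simp only [Finset.mem_insert, Finset.mem_image]
              rintro (h | ⟨b'', hb'', h⟩)
              · exact absurd h (by simp)
              · obtain rfl : b'' = b' := by
                  simpa using h
                exact hbS' hb''
            refine ih k (by omega) _ _ _ _ _ ?_ h2' h5' (by omega) (resp _ hjD hjS)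
            rw [h3, Finset.image_insert, Finset.insert_comm]
          · by_cases hdomH : IsDomSet H (insert b Dh)
            · exact .done _ _ _ hdomH
            · exfalso
              push_neg at hfree
              simp only [IsDomSet, not_forall, not_or, not_exists, not_and] at hdomH
              obtain ⟨bu, hbu1, hbu2⟩ := hdomH
              have hbuS : bu ∈ Sh := hfree bu hbu1
              refine (dead_aux (meas (insert (Sum.inr (a, b)) Dg) Sg k + 1) k _ _
                (Sum.inr (a, bu)) (Nat.lt_succ_self _) ?_).2 hsub
              refine ⟨by rw [h3]; exact Finset.mem_insert_of_mem (Finset.mem_image_of_mem _ hbuS),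
                fun c => hbu1 ((h2' bu).1 c), ?_⟩
              rintro (⟨c⟩ | ⟨c, b''⟩) hadj
              · have hc : c = a := hadj
                subst hc
                exact ⟨hAS, h5'⟩
              · obtain ⟨rfl, hadj'⟩ : a = c ∧ H.Adj bu b'' := hadj
                have hb''D : b'' ∉ insert b Dh := fun hin => hbu2 b'' hin hadj'.symm
                have hb''S : b'' ∈ Sh := hfree b'' hb''D
                exact ⟨by rw [h3]; exact Finset.mem_insert_of_mem (Finset.mem_image_of_mem _ hb''S),
                  fun c => hb''D ((h2' b'').1 c)⟩
      · -- wasted move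
        push_neg at hv
        have h2' : ∀ b, Sum.inr (a, b) ∈ insert v Dg ↔ b ∈ Dh := by
          intro b
          rw [Finset.mem_insert, h2 b]
          constructor
          · rintro (h | h)
            · exact absurd h.symm (hv b)
            · exact h
          · exact Or.inr
        have h5' : (Sum.inl a : Wv β) ∉ insert v Dg := by
          simp only [Finset.mem_insert]
          rintro (rfl | h)
          · exact hvS hAS
          · exact h5 h
        exact ih k (by omega) _ _ _ _ _ h3 h2' h5' (by omega) (StoD hsub)

lemma fin2_sub_ne : ∀ c : Fin 2, (1 - c : Fin 2) ≠ c := by decide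

lemma lower_core {m' : ℕ} [Nonempty β] (a : Fin 2) (v1 : Wv β)
    (hA1 : (Sum.inl a : Wv β) ∉ insert v1 (∅ : Finset (Wv β)))
    (hAa : ∀ b : β, Sum.inr (a, b) ∉ insert v1 (∅ : Finset (Wv β)))
    (hsub : DomWinS G' (insert v1 ∅) ∅ m') : DomWinD H ∅ ∅ m' := by
  rcases invS hsub with hdom1 | ⟨_, resp⟩
  · exfalso
    obtain ⟨b0⟩ := ‹Nonempty β›
    rcases hdom1 (Sum.inr (a, b0)) with h1 | ⟨u, hu, hadj⟩
    · exact hAa b0 h1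
    · rcases u with c | ⟨c, b'⟩
      · have : c = a := hadj
        subst this
        exact hA1 hu
      · obtain ⟨rfl, -⟩ : c = a ∧ H.Adj b' b0 := hadj
        exact hAa b' hu
  · have hresp := resp (Sum.inl a) hA1 (by simp)
    refine lower_main H a m' _ _ ∅ ∅ m' (by simp) ?_ hA1 le_rfl hresp
    intro b
    simp only [Finset.notMem_empty, iff_false]
    exact hAa b

lemma lower {m' : ℕ} (h : DomWinD G' ∅ ∅ (m' + 1)) : DomWinD H ∅ ∅ m' := by
  rcases isEmpty_or_nonempty β with hβ | hβ
  · exact .done _ _ _ (fun b => isEmptyElim b)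
  rcases invD h with hdom | ⟨k, v1, hk, _, _, hsub⟩
  · exfalso
    rcases hdom (Sum.inl 0) with h0 | ⟨u, hu, _⟩
    · simp at h0
    · simp at hu
  obtain rfl : k = m' := by omega
  rcases v1 with c | ⟨c, b'⟩
  · refine lower_core H (1 - c) _ ?_ ?_ hsub
    · simp only [Finset.mem_insert, Finset.notMem_empty, or_false, Sum.inl.injEq]
      exact fin2_sub_ne c
    · intro b; simp
  · refine lower_core H (1 - c) _ ?_ ?_ hsub
    · simp
    · intro b
      simp only [Finset.mem_insert, Finset.notMem_empty, or_false, Sum.inr.injEq,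
        Prod.mk.injEq, not_and]
      intro hc
      exact absurd hc (fin2_sub_ne c)
lemma fin2_eq : ∀ c : Fin 2, c = 0 ∨ c = 1 := by decide

/-- Dominator's set `{root 0} ∪ (copy 1 of an H-dominating set)` dominates the corona. -/
lemma upper_dom {D : Finset β} (hD : IsDomSet H D) :
    IsDomSet G' (insert (Sum.inl 0) (D.image (fun b => Sum.inr (1, b)))) := by
  rintro (c | ⟨c, b⟩)
  · rcases fin2_eq c with rfl | rfl
    · exact Or.inl (Finset.mem_insert_self _ _)
    · exact Or.inr ⟨Sum.inl 0, Finset.mem_insert_self _ _, show (0 : Fin 2) ≠ 1 by decide⟩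
  · rcases fin2_eq c with rfl | rfl
    · exact Or.inr ⟨Sum.inl 0, Finset.mem_insert_self _ _, rfl⟩
    · rcases hD b with h | ⟨u, hu, hadj⟩
      · exact Or.inl (Finset.mem_insert_of_mem (Finset.mem_image_of_mem _ h))
      · exact Or.inr ⟨Sum.inr (1, u),
          Finset.mem_insert_of_mem (Finset.mem_image_of_mem _ hu), ⟨rfl, hadj⟩⟩

/-- Imagination strategy: Dominator simulates an H-strategy inside copy 1. -/
lemma upper_aux : ∀ μ : ℕ, ∀ (n : ℕ) (D S : Finset β), meas D S n < μ →
    (DomWinD H D S n → ∀ T : Finset (Wv β), (∀ b, Sum.inr (1, b) ∈ T → b ∈ S) →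
      DomWinD G' (insert (Sum.inl 0) (D.image (fun b => Sum.inr (1, b)))) T n) ∧
    (DomWinS H D S n → ∀ T : Finset (Wv β), (∀ b, Sum.inr (1, b) ∈ T → b ∈ S) →
      DomWinS G' (insert (Sum.inl 0) (D.image (fun b => Sum.inr (1, b)))) T n) := by
  intro μ
  induction μ with
  | zero => intro n D S h; omega
  | succ μ ih =>
    intro n D S hm
    constructor
    · intro h T hT
      rcases invD h with hd | ⟨k, v, rfl, hvD, hvS, hsub⟩
      · exact .done _ _ _ (upper_dom H hd)
      · refine .step _ _ _ (Sum.inr (1, v)) ?_ (fun c => hvS (hT v c)) ?_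
        · simp only [Finset.mem_insert, Finset.mem_image]
          rintro (h | ⟨b', hb', h⟩)
          · exact absurd h (by simp)
          · obtain rfl : b' = v := by simpa using h
            exact hvD hb'
        · have := (ih k (insert v D) S
            (by have := meas_lt_of_step (D := D) (S := S) (k := k) v; omega)).2 hsub T hT
          rwa [Finset.image_insert, Finset.insert_comm] at this
    · intro h T hT
      rcases invS h with hd | ⟨⟨b0, hb0D, hb0S⟩, resp⟩
      · exact .done _ _ _ (upper_dom H hd)
      · refine .step _ _ _ ⟨Sum.inr (1, b0), ?_, fun c => hb0S (hT b0 c)⟩ ?_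
        · simp only [Finset.mem_insert, Finset.mem_image]
          rintro (h | ⟨b', hb', h⟩)
          · exact absurd h (by simp)
          · obtain rfl : b' = b0 := by simpa using h
            exact hb0D hb'
        · intro w hwD hwT
          by_cases hw : ∃ b, w = Sum.inr (1, b) ∧ b ∉ S ∧ b ∉ D
          · obtain ⟨b, rfl, hbS, hbD⟩ := hw
            refine (ih n D (insert b S)
              (by have := meas_lt_of_insertS (k := n) hbD hbS; omega)).1
              (resp b hbD hbS) (insert (Sum.inr (1, b)) T) ?_
            intro b' hb'
            rcases Finset.mem_insert.1 hb' with h | h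
            · obtain rfl : b' = b := by simpa using h
              exact Finset.mem_insert_self _ _
            · exact Finset.mem_insert_of_mem (hT b' h)
          · refine (ih n D (insert b0 S)
              (by have := meas_lt_of_insertS (k := n) hb0D hb0S; omega)).1
              (resp b0 hb0D hb0S) (insert w T) ?_
            intro b' hb'
            rcases Finset.mem_insert.1 hb' with h | h
            · subst h
              by_cases hb'S : b' ∈ S
              · exact Finset.mem_insert_of_mem hb'S
              · exfalso
                apply hw
                refine ⟨b', rfl, hb'S, ?_⟩
                intro hb'D
                exact hwD (Finset.mem_insert_of_mem (Finset.mem_image_of_mem _ hb'D))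
            · exact Finset.mem_insert_of_mem (hT b' h)

lemma dom_two_roots : IsDomSet G' (insert (Sum.inl 1) (insert (Sum.inl 0) ∅)) := by
  rintro (c | ⟨c, b⟩)
  · rcases fin2_eq c with rfl | rfl
    · exact Or.inl (by simp)
    · exact Or.inl (by simp)
  · exact Or.inr ⟨Sum.inl c, by rcases fin2_eq c with rfl | rfl <;> simp, rfl⟩

lemma upper {n : ℕ} (h : DomWinD H ∅ ∅ n) : DomWinD G' ∅ ∅ (n + 1) := by
  refine .step _ _ _ (Sum.inl 0) (by simp) (by simp) ?_
  by_cases hd : IsDomSet G' (insert (Sum.inl 0) ∅)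
  · exact .done _ _ _ hd
  · have hn : n ≠ 0 := by
      rintro rfl
      rcases invD h with hdom | ⟨k, v, hk, -⟩
      · exact hd (by simpa using upper_dom H hdom)
      · omega
    obtain ⟨k, rfl⟩ : ∃ k, n = k + 1 := ⟨n - 1, by omega⟩
    refine .step _ _ _ ⟨Sum.inl 1, by simp, by simp⟩ ?_
    intro w hwD hwS
    by_cases hw : w = Sum.inl 1
    · subst hw
      have := (upper_aux H (meas (∅ : Finset β) (∅ : Finset β) (k + 1) + 1) (k + 1) ∅ ∅
        (Nat.lt_succ_self _)).1 h (insert (Sum.inl 1) ∅) (by simp)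
      simpa using this
    · refine .step _ _ _ (Sum.inl 1) (by simp) ?_ (.done _ _ _ ?_)
      · simp only [Finset.mem_insert, Finset.notMem_empty, or_false]
        exact Ne.symm hw
      · exact dom_two_roots H
lemma gammaMB_eq_natInf {V : Type*} [DecidableEq V] (G : SimpleGraph V)
    (h : ∃ n, DomWinD G ∅ ∅ n) :
    gammaMB G = ((sInf {n : ℕ | DomWinD G ∅ ∅ n} : ℕ) : ℕ∞) := by
  apply le_antisymm
  · exact sInf_le ⟨_, rfl, Nat.sInf_mem h⟩
  · apply le_sInf
    rintro k ⟨n, rfl, hn⟩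
    exact_mod_cast Nat.sInf_le hn

end MBD
end MBDAux

/-- If `o(H) = 𝒟`, then `γ_MB(K₂ ⊙ H) = 1 + γ_MB(H)`. -/
theorem gammaMB_coronaProd_K2 {β : Type*} [Fintype β] [DecidableEq β]
    (H : SimpleGraph β) (hH : OutcomeD H) :
    gammaMB (coronaProd (⊤ : SimpleGraph (Fin 2)) H) = 1 + gammaMB H := by
  obtain ⟨hD, -⟩ := hH
  have hNwin : DomWinD H ∅ ∅ (sInf {n : ℕ | DomWinD H ∅ ∅ n}) := Nat.sInf_mem hD
  have hGwin := MBD.upper H hNwin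
  have hGne : ∃ m, DomWinD (coronaProd (⊤ : SimpleGraph (Fin 2)) H) ∅ ∅ m := ⟨_, hGwin⟩
  have key : sInf {m : ℕ | DomWinD (coronaProd (⊤ : SimpleGraph (Fin 2)) H) ∅ ∅ m}
      = sInf {n : ℕ | DomWinD H ∅ ∅ n} + 1 := by
    have hMwin : DomWinD (coronaProd (⊤ : SimpleGraph (Fin 2)) H) ∅ ∅
        (sInf {m : ℕ | DomWinD (coronaProd (⊤ : SimpleGraph (Fin 2)) H) ∅ ∅ m}) :=
      Nat.sInf_mem hGne
    have hMle : sInf {m : ℕ | DomWinD (coronaProd (⊤ : SimpleGraph (Fin 2)) H) ∅ ∅ m}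
        ≤ sInf {n : ℕ | DomWinD H ∅ ∅ n} + 1 := Nat.sInf_le hGwin
    obtain ⟨m', hm'⟩ : ∃ m',
        sInf {m : ℕ | DomWinD (coronaProd (⊤ : SimpleGraph (Fin 2)) H) ∅ ∅ m} = m' + 1 := by
      rcases MBD.invD hMwin with hdom | ⟨k, v, hk, -⟩
      · exfalso
        rcases hdom (Sum.inl 0) with h0 | ⟨u, hu, -⟩
        · simp at h0
        · simp at hu
      · exact ⟨k, hk⟩
    rw [hm'] at hMwin hMle ⊢
    have hge : sInf {n : ℕ | DomWinD H ∅ ∅ n} ≤ m' := Nat.sInf_le (MBD.lower H hMwin)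
    omega
  rw [MBD.gammaMB_eq_natInf _ hGne, MBD.gammaMB_eq_natInf _ hD, key]
  push_cast
  ring
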